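/- Let H be a Hopf algebra over K with unit e₂ and antipode S_B, and let H' = K·e₁ ⊕ H be its unitalization with new unit e₁. Extend Δ, ε, S by Δ(e₁) = (e₁−e₂)⊗(e₁−e₂) + e₂⊗e₂, ε(e₁) = 2, S(e₁) = e₁. Then the antipode axioms for a weak Hopf algebra hold at e₁: m(id⊗S)Δ(e₁) = (ε⊗id)(Δ(e₁)•(e₁⊗e₁)), m(S⊗id)Δ(e₁) = (id⊗ε)((e₁⊗e₁)•Δ(e₁)), and m(m⊗id)(S⊗id⊗S)(Δ⊗id)Δ(e₁) = e₁. -/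

import Mathlib

open TensorProduct Unitization

lemma mul_one_tmul (K A : Type*) [CommSemiring K] [Semiring A] [Algebra K A]
    (x : A ⊗[K] A) : x * ((1 : A) ⊗ₜ[K] (1 : A)) = x := by
  rw [← Algebra.TensorProduct.one_def]; exact mul_one x

lemma one_tmul_mul (K A : Type*) [CommSemiring K] [Semiring A] [Algebra K A]
    (x : A ⊗[K] A) : ((1 : A) ⊗ₜ[K] (1 : A)) * x = x := by
  rw [← Algebra.TensorProduct.one_def]; exact one_mul x

lemma antipode_one' (K H : Type*) [CommSemiring K] [Semiring H] [HopfAlgebra K H] :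
    (HopfAlgebra.antipode K : H →ₗ[K] H) 1 = 1 := by
  have := HopfAlgebra.mul_antipode_rTensor_comul_apply (R := K) (A := H) 1
  simpa [Bialgebra.comul_one, Algebra.TensorProduct.one_def] using this

/-- for the unitalization `H' = K·e₁ ⊕ H` of a Hopf algebra `H`
(with `Δ(e₁) = (e₁−e₂)⊗(e₁−e₂) + e₂⊗e₂`, `ε(e₁) = 2`, `S(e₁) = e₁`), the three
weak Hopf antipode axioms hold at `e₁`. -/
theorem stmt17 (K H : Type*) [Field K] [CharZero K] [Ring H] [HopfAlgebra K H]
    (Δ : Unitization K H →ₗ[K] Unitization K H ⊗[K] Unitization K H)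
    (ε : Unitization K H →ₗ[K] K)
    (S : Unitization K H →ₗ[K] Unitization K H)
    (hΔ1 : Δ 1 = ((1 : Unitization K H) - inr (1 : H)) ⊗ₜ[K]
        ((1 : Unitization K H) - inr (1 : H)) + (inr (1 : H)) ⊗ₜ[K] (inr (1 : H)))
    (hΔr : ∀ b : H, Δ (inr b)
        = TensorProduct.map (inrHom K K H) (inrHom K K H) (Coalgebra.comul b))
    (hε1 : ε 1 = 2)
    (hεr : ∀ b : H, ε (inr b) = Coalgebra.counit b)
    (hS1 : S 1 = 1)
    (hSr : ∀ b : H, S (inr b) = inr ((HopfAlgebra.antipode K : H →ₗ[K] H) b)) :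
    LinearMap.mul' K (Unitization K H) (TensorProduct.map LinearMap.id S (Δ 1))
      = (TensorProduct.lid K (Unitization K H))
          (TensorProduct.map ε LinearMap.id
            (Δ 1 * ((1 : Unitization K H) ⊗ₜ[K] (1 : Unitization K H))))
    ∧ LinearMap.mul' K (Unitization K H) (TensorProduct.map S LinearMap.id (Δ 1))
        = (TensorProduct.rid K (Unitization K H))
            (TensorProduct.map LinearMap.id ε
              (((1 : Unitization K H) ⊗ₜ[K] (1 : Unitization K H)) * Δ 1))
    ∧ LinearMap.mul' K (Unitization K H)
        (TensorProduct.map (LinearMap.mul' K (Unitization K H)) LinearMap.id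
          (TensorProduct.map (TensorProduct.map S LinearMap.id) S
            (TensorProduct.map Δ LinearMap.id (Δ 1)))) = 1 := by
  set r : Unitization K H := inr (1 : H) with hr
  have hrr : r * r = r := by simp [hr, ← Unitization.inr_mul]
  have hSrr : S r = r := by rw [hr, hSr, antipode_one']
  have hS1r : S (1 - r) = 1 - r := by rw [map_sub, hS1, hSrr]
  have hεrr : ε r = 1 := by rw [hr, hεr, Bialgebra.counit_one]
  have hΔrr : Δ r = r ⊗ₜ[K] r := by
    rw [hr, hΔr, Bialgebra.comul_one, Algebra.TensorProduct.one_def]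
    simp [hr]
  have hΔ1r : Δ (1 - r) = (1 - r) ⊗ₜ[K] (1 - r) := by
    rw [map_sub, hΔ1, hΔrr]; abel
  have hsq : (1 - r) * (1 - r) = 1 - r := by
    rw [sub_mul, one_mul, mul_sub, mul_one, hrr]; abel
  have he : ε (1 - r) = 1 := by rw [map_sub, hε1, hεrr]; norm_num
  have hmul1 : Δ 1 * ((1 : Unitization K H) ⊗ₜ[K] (1 : Unitization K H))
      = (1 - r) ⊗ₜ[K] (1 - r) + r ⊗ₜ[K] r := by
    rw [mul_one_tmul, hΔ1]
  have hmul2 : ((1 : Unitization K H) ⊗ₜ[K] (1 : Unitization K H)) * Δ 1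
      = (1 - r) ⊗ₜ[K] (1 - r) + r ⊗ₜ[K] r := by
    rw [one_tmul_mul, hΔ1]
  refine ⟨?_, ?_, ?_⟩
  · rw [hmul1, hΔ1]
    simp only [map_add, map_tmul, LinearMap.id_coe, id_eq, LinearMap.mul'_apply,
      lid_tmul, hS1r, hSrr, hsq, hrr, he, hεrr, one_smul]
  · rw [hmul2, hΔ1]
    simp only [map_add, map_tmul, LinearMap.id_coe, id_eq, LinearMap.mul'_apply,
      rid_tmul, hS1r, hSrr, hsq, hrr, he, hεrr, one_smul]
  · rw [hΔ1]
    simp only [map_add, map_tmul, LinearMap.id_coe, id_eq, LinearMap.mul'_apply,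
      hΔ1r, hΔrr, hS1r, hSrr, hsq, hrr]
    abel
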